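/- Let A be an abelian group and let (G, β) be an A-bordered graph with no nowhere-zero flow. Let B ⊆ V(G) be such that the induced subgraph G[B] is connected, and let f be a nowhere-zero flow in (G, β)/B, where /B denotes contraction of the partition consisting of B together with singletons; thus f is defined on the ordered pairs (u, v) with uv ∈ E(G) and not both u, v in B. Define β_f : B → A by β_f(u) = β(u) − ∑_{v ∉ B, uv ∈ E(G)} f(u, v). Then ∑_{u ∈ B} β_f(u) = 0 (so β_f is an A-boundary for the connected graph G[B]), and the A-bordered graph (G[B], β_f) has no nowhere-zero flow. -/

import Mathlib

open scoped Classical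

section FlowDefs

variable {V : Type} [Fintype V] [DecidableEq V] {A : Type} [AddCommGroup A]

/-- `β` is an `A`-boundary for `G`: its values sum to zero on every connected component. -/
def IsBoundary (G : SimpleGraph V) (β : V → A) : Prop :=
  ∀ x : V, ∑ v ∈ Finset.univ.filter (fun v => G.Reachable v x), β v = 0

/-- `(G, β)` has a nowhere-zero flow: an antisymmetric function on ordered adjacent pairs,
never zero on edges, whose out-sum at each vertex `u` is `β u`. -/
def HasNZFlow (G : SimpleGraph V) (β : V → A) : Prop :=
  ∃ f : V → V → A,
    (∀ u v, G.Adj u v → f u v = - f v u) ∧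
    (∀ u v, G.Adj u v → f u v ≠ 0) ∧
    (∀ u : V, ∑ v ∈ Finset.univ.filter (fun v => G.Adj u v), f u v = β u)

/-- `(G, β)/P` has a nowhere-zero flow, where the partition `P` of `V(G)` is given as a setoid:
an antisymmetric, nowhere-zero function on the ordered adjacent pairs lying in distinct parts,
such that for every part, the sum of the values leaving the part is the sum of `β` on it. -/
def HasNZFlowQuot (G : SimpleGraph V) (β : V → A) (P : Setoid V) : Prop :=
  ∃ f : V → V → A,
    (∀ u v, G.Adj u v → ¬ P.r u v → f u v = - f v u) ∧
    (∀ u v, G.Adj u v → ¬ P.r u v → f u v ≠ 0) ∧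
    (∀ x : V,
      ∑ u ∈ Finset.univ.filter (fun u => P.r u x),
        ∑ v ∈ Finset.univ.filter (fun v => G.Adj u v ∧ ¬ P.r u v), f u v
      = ∑ v ∈ Finset.univ.filter (fun v => P.r v x), β v)

/-- The partition `P` is `G`-connected: every part induces a connected subgraph of `G`. -/
def PartsConnected (G : SimpleGraph V) (P : Setoid V) : Prop :=
  ∀ x : V, (G.induce {v | P.r v x}).Connected

/-- `(G, β)` is a flow-critical `A`-bordered graph: `β` is an `A`-boundary, `G` is connected,
`(G, β)` has no nowhere-zero flow, but `(G, β)/P` has one for every `G`-connected partition `P`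
with at least one part of size at least two. -/
def FlowCritical (G : SimpleGraph V) (β : V → A) : Prop :=
  IsBoundary G β ∧ G.Connected ∧ ¬ HasNZFlow G β ∧
  ∀ P : Setoid V, PartsConnected G P → (∃ x y : V, x ≠ y ∧ P.r x y) →
    HasNZFlowQuot G β P

end FlowDefs

/-- The partition of `V` whose parts are `B` and the singletons outside of `B`. -/
def contractSetoid {V : Type} (B : Set V) : Setoid V where
  r u v := u = v ∨ (u ∈ B ∧ v ∈ B)
  iseqv := by
    refine ⟨fun x => Or.inl rfl, ?_, ?_⟩
    · rintro x y (rfl | h)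
      · exact Or.inl rfl
      · exact Or.inr ⟨h.2, h.1⟩
    · rintro x y z (rfl | h1) h2
      · exact h2
      · rcases h2 with rfl | h2
        · exact Or.inr h1
        · exact Or.inr ⟨h1.1, h2.2⟩

/-- If `(G, β)` has no nowhere-zero flow, `G[B]` is connected and `f` is a nowhere-zero flow
in `(G, β)/B`, then `β_f(u) = β(u) − ∑_{v ∉ B, uv ∈ E} f(u,v)` sums to zero over `B` and the
bordered graph `(G[B], β_f)` has no nowhere-zero flow. -/
theorem restrict_no_nzflow (V A : Type) [Fintype V] [DecidableEq V] [AddCommGroup A]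
    (G : SimpleGraph V) (β : V → A) (hb : IsBoundary G β)
    (hno : ¬ HasNZFlow G β)
    (B : Set V) (hBconn : (G.induce B).Connected)
    (f : V → V → A)
    (hanti : ∀ u v, G.Adj u v → ¬ (contractSetoid B).r u v → f u v = - f v u)
    (hnz : ∀ u v, G.Adj u v → ¬ (contractSetoid B).r u v → f u v ≠ 0)
    (hflow : ∀ x : V,
      ∑ u ∈ Finset.univ.filter (fun u => (contractSetoid B).r u x),
        ∑ v ∈ Finset.univ.filter (fun v => G.Adj u v ∧ ¬ (contractSetoid B).r u v), f u v
      = ∑ v ∈ Finset.univ.filter (fun v => (contractSetoid B).r v x), β v) :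
    (∑ u ∈ Finset.univ.filter (fun u => u ∈ B),
        (β u - ∑ v ∈ Finset.univ.filter (fun v => v ∉ B ∧ G.Adj u v), f u v) = 0) ∧
    ¬ HasNZFlow (G.induce B)
        (fun u => β u.1 - ∑ v ∈ Finset.univ.filter (fun v => v ∉ B ∧ G.Adj u.1 v), f u.1 v) := by

  classical
  obtain ⟨x₀⟩ := hBconn.nonempty
  -- basic filter facts
  have hfilter1 : Finset.univ.filter (fun v => (contractSetoid B).r v (x₀ : V)) =
      Finset.univ.filter (fun v => v ∈ B) := by
    ext v
    simp only [Finset.mem_filter, Finset.mem_univ, true_and]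
    constructor
    · rintro (rfl | h)
      · exact x₀.2
      · exact h.1
    · intro h; exact Or.inr ⟨h, x₀.2⟩
  have hfilter2 : ∀ u : V, u ∈ B →
      Finset.univ.filter (fun v => G.Adj u v ∧ ¬ (contractSetoid B).r u v) =
      Finset.univ.filter (fun v => v ∉ B ∧ G.Adj u v) := by
    intro u hu; ext v
    simp only [Finset.mem_filter, Finset.mem_univ, true_and]
    constructor
    · rintro ⟨hadj, hnr⟩
      exact ⟨fun hv => hnr (Or.inr ⟨hu, hv⟩), hadj⟩
    · rintro ⟨hv, hadj⟩
      refine ⟨hadj, ?_⟩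
      rintro (rfl | h)
      · exact hv hu
      · exact hv h.2
  have part1 : ∑ u ∈ Finset.univ.filter (fun u => u ∈ B),
      (β u - ∑ v ∈ Finset.univ.filter (fun v => v ∉ B ∧ G.Adj u v), f u v) = 0 := by
    have h := hflow (x₀ : V)
    rw [hfilter1] at h
    rw [Finset.sum_congr rfl (fun u hu => by
      rw [hfilter2 u (Finset.mem_filter.mp hu).2])] at h
    rw [Finset.sum_sub_distrib, h, sub_self]
  have key : ∀ x : V, x ∉ B →
      ∑ v ∈ Finset.univ.filter (fun v => G.Adj x v), f x v = β x := by
    intro x hx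
    have h := hflow x
    have e1 : Finset.univ.filter (fun u => (contractSetoid B).r u x) = {x} := by
      ext u
      simp only [Finset.mem_filter, Finset.mem_univ, true_and, Finset.mem_singleton]
      constructor
      · rintro (rfl | h)
        · rfl
        · exact absurd h.2 hx
      · rintro rfl; exact Or.inl rfl
    have e2 : Finset.univ.filter (fun v => G.Adj x v ∧ ¬ (contractSetoid B).r x v) =
        Finset.univ.filter (fun v => G.Adj x v) := by
      ext v
      simp only [Finset.mem_filter, Finset.mem_univ, true_and, and_iff_left_iff_imp]
      intro hadj
      rintro (rfl | h)
      · exact G.irrefl hadj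
      · exact hx h.1
    rw [e1] at h
    simp only [Finset.sum_singleton] at h
    rw [e2] at h
    exact h
  have nr : ∀ u v : V, G.Adj u v → (u ∉ B ∨ v ∉ B) → ¬ (contractSetoid B).r u v := by
    intro u v hadj hor
    rintro (rfl | h)
    · exact G.irrefl hadj
    · rcases hor with h' | h'
      · exact h' h.1
      · exact h' h.2
  refine ⟨part1, ?_⟩
  rintro ⟨g, ganti, gnz, gflow⟩
  apply hno
  refine ⟨fun u v => if hu : u ∈ B then (if hv : v ∈ B then g ⟨u, hu⟩ ⟨v, hv⟩ else f u v)
      else f u v, ?_, ?_, ?_⟩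
  · intro u v hadj
    by_cases hu : u ∈ B <;> by_cases hv : v ∈ B
    · simp only [dif_pos hu, dif_pos hv]
      exact ganti ⟨u, hu⟩ ⟨v, hv⟩ hadj
    · simp only [dif_pos hu, dif_neg hv]
      exact hanti u v hadj (nr u v hadj (Or.inr hv))
    · simp only [dif_neg hu, dif_pos hv]
      exact hanti u v hadj (nr u v hadj (Or.inl hu))
    · simp only [dif_neg hu, dif_neg hv]
      exact hanti u v hadj (nr u v hadj (Or.inl hu))
  · intro u v hadj
    by_cases hu : u ∈ B <;> by_cases hv : v ∈ B
    · simp only [dif_pos hu, dif_pos hv]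
      exact gnz ⟨u, hu⟩ ⟨v, hv⟩ hadj
    · simp only [dif_pos hu, dif_neg hv]
      exact hnz u v hadj (nr u v hadj (Or.inr hv))
    · simp only [dif_neg hu, dif_pos hv]
      exact hnz u v hadj (nr u v hadj (Or.inl hu))
    · simp only [dif_neg hu, dif_neg hv]
      exact hnz u v hadj (nr u v hadj (Or.inl hu))
  · intro u
    by_cases hu : u ∈ B
    · -- split into v ∈ B and v ∉ B
      rw [← Finset.sum_filter_add_sum_filter_not
        (Finset.univ.filter (fun v => G.Adj u v)) (fun v => v ∈ B)]
      have eB : ∑ v ∈ (Finset.univ.filter (fun v => G.Adj u v)).filter (fun v => v ∈ B),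
          (if hu' : u ∈ B then (if hv : v ∈ B then g ⟨u, hu'⟩ ⟨v, hv⟩ else f u v) else f u v)
          = ∑ w ∈ Finset.univ.filter (fun w : B => (G.induce B).Adj ⟨u, hu⟩ w),
              g ⟨u, hu⟩ w := by
        refine Finset.sum_bij (fun v hv => (⟨v, (Finset.mem_filter.mp hv).2⟩ : B)) ?_ ?_ ?_ ?_
        · intro v hv
          have h1 := Finset.mem_filter.mp hv
          have h2 := Finset.mem_filter.mp h1.1
          exact Finset.mem_filter.mpr ⟨Finset.mem_univ _, h2.2⟩
        · intro v hv w hw h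
          exact congrArg Subtype.val h
        · intro w hw
          have h1 := Finset.mem_filter.mp hw
          refine ⟨(w : V), Finset.mem_filter.mpr ⟨Finset.mem_filter.mpr
            ⟨Finset.mem_univ _, h1.2⟩, w.2⟩, Subtype.ext rfl⟩
        · intro v hv
          have hvB : v ∈ B := (Finset.mem_filter.mp hv).2
          simp only [dif_pos hu, dif_pos hvB]
      have eNB : ∑ v ∈ (Finset.univ.filter (fun v => G.Adj u v)).filter (fun v => v ∉ B),
          (if hu' : u ∈ B then (if hv : v ∈ B then g ⟨u, hu'⟩ ⟨v, hv⟩ else f u v) else f u v)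
          = ∑ v ∈ Finset.univ.filter (fun v => v ∉ B ∧ G.Adj u v), f u v := by
        rw [Finset.filter_filter]
        refine Finset.sum_congr ?_ ?_
        · ext v
          simp only [Finset.mem_filter, Finset.mem_univ, true_and, and_comm]
        · intro v hv
          have hvB : v ∉ B := (Finset.mem_filter.mp hv).2.1
          simp only [dif_pos hu, dif_neg hvB]
      rw [eB, eNB]
      have hg : ∑ w ∈ Finset.univ.filter (fun w : B => (G.induce B).Adj ⟨u, hu⟩ w), g ⟨u, hu⟩ w
          = β u - ∑ v ∈ Finset.univ.filter (fun v => v ∉ B ∧ G.Adj u v), f u v := by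
        convert gflow ⟨u, hu⟩
      rw [hg]
      exact sub_add_cancel _ _
    · have e : ∀ v ∈ Finset.univ.filter (fun v => G.Adj u v),
          (if hu' : u ∈ B then (if hv : v ∈ B then g ⟨u, hu'⟩ ⟨v, hv⟩ else f u v) else f u v)
          = f u v := by
        intro v hv
        simp only [dif_neg hu]
      rw [Finset.sum_congr rfl e]
      exact key u hu
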